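/- Let X and Y be independent nonnegative random variables with E[X] < ∞, and suppose P(Y ≤ t) ~ t·L(t) as t ↓ 0 for a positive slowly varying function L that is non-increasing in a neighborhood of 0. Then P(Y ≤ tX)/P(Y ≤ t) → E[X] as t ↓ 0. -/

import Mathlib

open MeasureTheory Filter ProbabilityTheory

set_option maxHeartbeats 1000000

/-- If `X, Y ≥ 0` are independent with `E[X] < ∞` and `P(Y ≤ t) ~ t L(t)` as `t ↓ 0`
for a positive slowly varying (at 0) function `L` non-increasing near `0`, then
`P(Y ≤ tX)/P(Y ≤ t) → E[X]` as `t ↓ 0`. -/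
theorem stmt10 {Ω : Type*} [MeasurableSpace Ω] (P : Measure Ω) [IsProbabilityMeasure P]
    (X Y : Ω → ℝ) (hXmeas : Measurable X) (hYmeas : Measurable Y)
    (hXnn : ∀ᵐ ω ∂P, 0 ≤ X ω) (hYnn : ∀ᵐ ω ∂P, 0 ≤ Y ω)
    (hXint : Integrable X P)
    (hindep : IndepFun X Y P)
    (L : ℝ → ℝ) (hLpos : ∀ t : ℝ, 0 < t → 0 < L t)
    (hLslow : ∀ x : ℝ, 0 < x →
      Tendsto (fun t : ℝ => L (t * x) / L t) (nhdsWithin 0 (Set.Ioi 0)) (nhds 1))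
    (hLmono : ∃ δ : ℝ, 0 < δ ∧ AntitoneOn L (Set.Ioo 0 δ))
    (htail : Tendsto (fun t : ℝ => (P {ω | Y ω ≤ t}).toReal / (t * L t))
      (nhdsWithin 0 (Set.Ioi 0)) (nhds 1)) :
    Tendsto
      (fun t : ℝ => (P {ω | Y ω ≤ t * X ω}).toReal / (P {ω | Y ω ≤ t}).toReal)
      (nhdsWithin 0 (Set.Ioi 0)) (nhds (∫ ω, X ω ∂P)) := by
  classical
  set l : Filter ℝ := nhdsWithin 0 (Set.Ioi 0) with hl
  set F : ℝ → ℝ := fun s => (P {ω | Y ω ≤ s}).toReal with hFdef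
  have hFnn : ∀ s, 0 ≤ F s := fun s => ENNReal.toReal_nonneg
  have hFle1 : ∀ s, F s ≤ 1 := by
    intro s
    have h := ENNReal.toReal_mono (by simp) (prob_le_one (μ := P) (s := {ω | Y ω ≤ s}))
    simpa using h
  have hFmono : Monotone F := by
    intro a b hab
    exact ENNReal.toReal_mono (measure_ne_top P _)
      (measure_mono (fun ω hω => le_trans hω hab))
  have hFmeas : Measurable F := hFmono.measurable
  -- eventual two-sided bounds on F
  have h2 : ∀ᶠ t in l, (1/2)*(t*L t) ≤ F t ∧ F t ≤ 2*(t*L t) ∧ 0 < F t := by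
    have ha := htail.eventually_const_lt (show (1:ℝ)/2 < 1 by norm_num)
    have hb := htail.eventually_lt_const (show (1:ℝ) < 2 by norm_num)
    filter_upwards [ha, hb, self_mem_nhdsWithin] with t h1 h2 ht
    have ht' : (0:ℝ) < t := ht
    have hL := hLpos t ht'
    have htL : 0 < t * L t := mul_pos ht' hL
    have hlow : (1/2)*(t*L t) < F t := (lt_div_iff₀ htL).1 h1
    have hhigh : F t < 2*(t*L t) := by
      have := (div_lt_iff₀ htL).1 h2
      linarith
    exact ⟨hlow.le, hhigh.le, lt_of_le_of_lt (by positivity) hlow⟩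
  have hmulx : ∀ x : ℝ, 0 < x → Tendsto (fun t : ℝ => t * x) l l := by
    intro x hx
    have h1 : Tendsto (fun t : ℝ => t * x) l (nhds 0) := by
      have h0 : Tendsto (fun t : ℝ => t * x) (nhds 0) (nhds 0) := by
        simpa using (continuous_mul_right x).tendsto (0:ℝ)
      exact h0.mono_left nhdsWithin_le_nhds
    refine tendsto_nhdsWithin_of_tendsto_nhds_of_eventually_within _ h1 ?_
    filter_upwards [self_mem_nhdsWithin] with t ht
    exact Set.mem_Ioi.2 (mul_pos ht hx)
  have hratio : ∀ x : ℝ, 0 < x → Tendsto (fun t => F (t*x) / F t) l (nhds x) := by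
    intro x hx
    have T1 : Tendsto (fun t => F (t*x) / ((t*x) * L (t*x))) l (nhds 1) :=
      htail.comp (hmulx x hx)
    have T2 := hLslow x hx
    have T3 : Tendsto (fun t => (t * L t) / F t) l (nhds 1) := by
      have h := htail.inv₀ one_ne_zero
      simpa [inv_div] using h
    have Tprod : Tendsto
        (fun t => (F (t*x) / ((t*x) * L (t*x))) * (L (t*x) / L t) * x * ((t*L t)/F t))
        l (nhds x) := by
      have h := ((T1.mul T2).mul (tendsto_const_nhds (x := x))).mul T3
      simpa using h
    refine Tendsto.congr' ?_ Tprod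
    filter_upwards [h2, (hmulx x hx).eventually h2, self_mem_nhdsWithin] with t
      hQ hQx ht
    have ht' : (0:ℝ) < t := ht
    have htx : (0:ℝ) < t * x := mul_pos ht' hx
    have hLt := (hLpos t ht').ne'
    have hLtx := (hLpos (t*x) htx).ne'
    have hFt := hQ.2.2.ne'
    field_simp
  have hF0 : F 0 = 0 := by
    by_contra h0
    have ha : 0 < F 0 := lt_of_le_of_ne (hFnn 0) (Ne.symm h0)
    have hr := hratio (F 0 / 2) (by positivity)
    have hub := hr.eventually_lt_const (show F 0 / 2 < F 0 by linarith)
    have hlb : ∀ᶠ t in l, F 0 ≤ F (t * (F 0 / 2)) / F t := by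
      filter_upwards [h2, self_mem_nhdsWithin] with t hQ ht
      have ht' : (0:ℝ) < t := ht
      rw [le_div_iff₀ hQ.2.2]
      calc F 0 * F t ≤ F 0 * 1 := by nlinarith [hFle1 t, hQ.2.2]
        _ = F 0 := mul_one _
        _ ≤ F (t * (F 0/2)) := hFmono (by positivity)
    obtain ⟨t, h₁, h₂⟩ := (hlb.and hub).exists
    linarith
  -- the domination constant
  obtain ⟨δ, hδ, hanti⟩ := hLmono
  obtain ⟨u, hu, hsub⟩ := mem_nhdsGT_iff_exists_Ioo_subset.1 h2
  have hu' : (0:ℝ) < u := hu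
  obtain ⟨t₁, ht₁pos, ht₁δ, hprop⟩ : ∃ t₁ : ℝ, 0 < t₁ ∧ t₁ ≤ δ ∧ ∀ s : ℝ, 0 < s → s < t₁ →
      (1/2)*(s*L s) ≤ F s ∧ F s ≤ 2*(s*L s) ∧ 0 < F s := by
    refine ⟨min u δ, lt_min hu' hδ, min_le_right _ _, ?_⟩
    intro s hs hst
    exact hsub ⟨hs, lt_of_lt_of_le hst (min_le_left _ _)⟩
  obtain ⟨c, hc, hcanti⟩ : ∃ c : ℝ, 0 < c ∧ ∀ t : ℝ, 0 < t → t ≤ t₁/2 → c ≤ L t := by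
    refine ⟨L (t₁/2), hLpos _ (by positivity), ?_⟩
    intro t ht htle
    exact hanti ⟨ht, by linarith [lt_of_le_of_lt htle (by linarith : t₁/2 < δ)]⟩
      ⟨by positivity, by linarith⟩ htle
  obtain ⟨C, hC4, hC2⟩ : ∃ C : ℝ, 4 ≤ C ∧ 2/(t₁*c) ≤ C :=
    ⟨max 4 (2/(t₁*c)), le_max_left _ _, le_max_right _ _⟩
  have key : ∀ t : ℝ, 0 < t → t < t₁/2 → ∀ x : ℝ, 0 ≤ x →
      F (t*x)/F t ≤ C * (x+1) := by
    intro t ht ht0 x hx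
    have htδ : t ∈ Set.Ioo 0 δ := ⟨ht, by linarith⟩
    have hQt := hprop t ht (by linarith)
    have hcle : c ≤ L t := hcanti t ht ht0.le
    by_cases hx1 : x ≤ 1
    · have hle : F (t*x) ≤ F t := hFmono (by nlinarith)
      have h1 : F (t*x)/F t ≤ 1 := (div_le_one hQt.2.2).2 hle
      nlinarith
    · push_neg at hx1
      by_cases hxt : t*x < t₁
      · have htxpos : 0 < t * x := mul_pos ht (by linarith)
        have hQtx := hprop (t*x) htxpos hxt
        have hLle : L (t*x) ≤ L t := by
          refine hanti htδ ⟨htxpos, by linarith⟩ (le_mul_of_one_le_right ht.le hx1.le)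
        have hLtpos := hLpos t ht
        have h1 : F (t*x) ≤ 2*((t*x)*L t) := by nlinarith [hQtx.2.1]
        have h2' : F (t*x)/F t ≤ (2*((t*x)*L t)) / ((1/2)*(t*L t)) :=
          div_le_div₀ (by positivity) h1 (by positivity) hQt.1
        have heq : (2*((t*x)*L t)) / ((1/2)*(t*L t)) = 4*x := by
          field_simp
          ring
        rw [heq] at h2'
        nlinarith
      · push_neg at hxt
        have hLtpos := hLpos t ht
        have hFtc : (1/2)*(t*c) ≤ F t := le_trans (by nlinarith) hQt.1
        have h2' : F (t*x)/F t ≤ 1/((1/2)*(t*c)) :=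
          div_le_div₀ (by norm_num) (hFle1 _) (by positivity) hFtc
        have h3 : 1/((1/2)*(t*c)) ≤ (2/(t₁*c)) * x := by
          rw [div_le_iff₀ (by positivity)]
          have heq : (2/(t₁*c)) * x * ((1/2)*(t*c)) = (t*x)/t₁ := by
            field_simp
          rw [heq, le_div_iff₀ ht₁pos]
          linarith
        have h4 : (2/(t₁*c)) * x ≤ C * (x+1) := by
          have h2c : 0 ≤ 2/(t₁*c) := by positivity
          nlinarith
        linarith
    -- end key
  haveI : IsProbabilityMeasure (P.map X) := Measure.isProbabilityMeasure_map hXmeas.aemeasurable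
  haveI : IsProbabilityMeasure (P.map Y) := Measure.isProbabilityMeasure_map hYmeas.aemeasurable
  have hprod : P.map (fun ω => (X ω, Y ω)) = (P.map X).prod (P.map Y) :=
    (indepFun_iff_map_prod_eq_prod_map_map hXmeas.aemeasurable hYmeas.aemeasurable).1 hindep
  have hν : ∀ s : ℝ, (P.map Y) (Set.Iic s) = P {ω | Y ω ≤ s} := by
    intro s
    rw [Measure.map_apply hYmeas measurableSet_Iic]
    rfl
  have hkey : ∀ t : ℝ, 0 < t →
      (P {ω | Y ω ≤ t * X ω}).toReal = ∫ x, F (t*x) ∂(P.map X) := by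
    intro t ht
    have hS : MeasurableSet {p : ℝ × ℝ | p.2 ≤ t * p.1} :=
      measurableSet_le measurable_snd (measurable_fst.const_mul t)
    have h1 : P {ω | Y ω ≤ t * X ω}
        = (P.map (fun ω => (X ω, Y ω))) {p : ℝ × ℝ | p.2 ≤ t * p.1} := by
      rw [Measure.map_apply (hXmeas.prodMk hYmeas) hS]
      rfl
    have h2' : (P.map (fun ω => (X ω, Y ω))) {p : ℝ × ℝ | p.2 ≤ t * p.1}
        = ∫⁻ x, (P.map Y) (Set.Iic (t * x)) ∂(P.map X) := by
      rw [hprod, Measure.prod_apply hS]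
      exact lintegral_congr fun x => rfl
    have hmono2 : Monotone (fun x : ℝ => (P.map Y) (Set.Iic (t*x))) := by
      intro a b hab
      exact measure_mono (Set.Iic_subset_Iic.2 (mul_le_mul_of_nonneg_left hab ht.le))
    have h3 : ∫ x, F (t*x) ∂(P.map X)
        = (∫⁻ x, (P.map Y) (Set.Iic (t*x)) ∂(P.map X)).toReal := by
      rw [← integral_toReal hmono2.measurable.aemeasurable
        (Filter.Eventually.of_forall fun x => measure_lt_top _ _)]
      refine integral_congr_ae (Filter.Eventually.of_forall fun x => ?_)
      simp only [hFdef, hν]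
    rw [h1, h2']
    exact h3.symm
  have hXae : ∀ᵐ x ∂(P.map X), 0 ≤ x :=
    (ae_map_iff hXmeas.aemeasurable measurableSet_Ici).2 hXnn
  have hid : Integrable (fun x : ℝ => x) (P.map X) :=
    (integrable_map_measure aestronglyMeasurable_id hXmeas.aemeasurable).2 hXint
  have hbound_int : Integrable (fun x : ℝ => C * (x+1)) (P.map X) :=
    ((hid.add (integrable_const 1)).const_mul C)
  have ht_small : ∀ᶠ t in l, t < t₁/2 := by
    have hid0 : Tendsto (fun t : ℝ => t) l (nhds 0) := tendsto_id.mono_left nhdsWithin_le_nhds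
    exact hid0.eventually_lt_const (by positivity)
  have hDCT : Tendsto (fun t : ℝ => ∫ x, F (t*x)/F t ∂(P.map X)) l
      (nhds (∫ x : ℝ, x ∂(P.map X))) := by
    refine tendsto_integral_filter_of_dominated_convergence (fun x => C * (x+1))
      ?_ ?_ hbound_int ?_
    · refine Filter.Eventually.of_forall fun t => ?_
      exact ((hFmeas.comp (measurable_const_mul t)).div_const (F t)).aestronglyMeasurable
    · filter_upwards [self_mem_nhdsWithin, ht_small] with t ht htsmall
      filter_upwards [hXae] with x hx
      rw [Real.norm_eq_abs, abs_of_nonneg (div_nonneg (hFnn _) (hFnn _))]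
      exact key t ht htsmall x hx
    · filter_upwards [hXae] with x hx
      rcases eq_or_lt_of_le hx with h|h
      · simp only [← h, mul_zero, hF0, zero_div]
        exact tendsto_const_nhds
      · exact hratio x h
  have hint : ∫ x : ℝ, x ∂(P.map X) = ∫ ω, X ω ∂P :=
    integral_map hXmeas.aemeasurable aestronglyMeasurable_id
  rw [← hint]
  apply hDCT.congr'
  filter_upwards [self_mem_nhdsWithin] with t ht
  show ∫ x, F (t*x)/F t ∂(P.map X) = (P {ω | Y ω ≤ t * X ω}).toReal / F t
  rw [integral_div, ← hkey t ht]
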